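/- For all k ≥ 2 and every (k−1)-edge-colouring of the complete k-uniform hypergraph on ℕ, there is a single monochromatic Berge-path (finite or infinite) whose core is all of ℕ; in particular ℕ admits a monochromatic Hamiltonian Berge-path. -/

import Mathlib

open Classical in
lemma exists_ufilter_const {r : ℕ} (U : Ultrafilter ℕ) (h : ℕ → Fin r) :
    ∃ c, {y | h y = c} ∈ U := by
  by_contra hc
  push_neg at hc
  have h1 : ∀ c, {y | h y ≠ c} ∈ U := by
    intro c
    have := Ultrafilter.compl_mem_iff_notMem.2 (hc c)
    simpa [Set.compl_setOf] using this
  have h2 : (⋂ c, {y | h y ≠ c}) ∈ U := (Filter.iInter_mem).2 h1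
  have h3 : (⋂ c, {y : ℕ | h y ≠ c}) = ∅ := by
    ext y; simp
  rw [h3] at h2
  simp at h2

noncomputable def ggg {r : ℕ} (U : Ultrafilter ℕ) (f : Finset ℕ → Fin r) : ℕ → Finset ℕ → Fin r
  | 0 => f
  | (m+1) => fun A => Classical.choose (exists_ufilter_const U (fun y => ggg U f m (insert y A)))

lemma ggg_spec {r : ℕ} (U : Ultrafilter ℕ) (f : Finset ℕ → Fin r) (m : ℕ) (A : Finset ℕ) :
    {y | ggg U f m (insert y A) = ggg U f (m+1) A} ∈ U :=
  Classical.choose_spec (exists_ufilter_const U (fun y => ggg U f m (insert y A)))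

/-- The infinite Ramsey theorem for `n`-uniform hypergraphs on an infinite subset of `ℕ`. -/
theorem infRamsey {r : ℕ} (n : ℕ) (f : Finset ℕ → Fin r) (S : Set ℕ) (hS : S.Infinite) :
    ∃ (c : Fin r) (T : Set ℕ), T ⊆ S ∧ T.Infinite ∧
      ∀ C : Finset ℕ, ↑C ⊆ T → C.card = n → f C = c := by
  classical
  have hne : (Filter.cofinite ⊓ Filter.principal S).NeBot := by
    rw [Filter.inf_principal_neBot_iff]
    intro u hu
    have h2 : S \ uᶜ ⊆ u ∩ S := fun x hx => ⟨not_not.1 hx.2, hx.1⟩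
    exact ((hS.diff (Filter.mem_cofinite.1 hu)).mono h2).nonempty
  set U : Ultrafilter ℕ := Ultrafilter.of (Filter.cofinite ⊓ Filter.principal S) with hU
  have hmemU : ∀ s : Set ℕ, s ∈ (Filter.cofinite ⊓ Filter.principal S) → s ∈ U :=
    fun s hs => (Ultrafilter.of_le _) hs
  have hSU : S ∈ U := hmemU S (Filter.mem_inf_of_right (Filter.mem_principal_self S))
  have hcof : ∀ s : Set ℕ, s ∈ Filter.cofinite → s ∈ U := fun s hs =>
    hmemU s (Filter.mem_inf_of_left hs)
  -- the choice set for a given finite set of already-chosen elements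
  set D : Finset ℕ → Set ℕ := fun F =>
    S ∩ {y | ∀ z ∈ F, z < y} ∩
      ⋂ A ∈ F.powerset.filter (fun A => A.card < n),
        {y | ggg U f (n - A.card - 1) (insert y A) = ggg U f (n - A.card) A} with hD
  have hDU : ∀ F, D F ∈ U := by
    intro F
    refine Filter.inter_mem (Filter.inter_mem hSU ?_) ?_
    · apply hcof
      rw [Filter.mem_cofinite]
      apply Set.Finite.subset (Set.finite_Iic (F.sup id))
      intro y hy
      simp only [Set.mem_compl_iff, Set.mem_setOf_eq, not_forall] at hy
      obtain ⟨z, hz, hyz⟩ := hy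
      exact le_trans (not_lt.1 hyz) (Finset.le_sup (f := id) hz)
    · refine (Filter.biInter_finset_mem _).2 ?_
      intro A hA
      simp only [Finset.mem_filter] at hA
      have h1 : n - A.card - 1 + 1 = n - A.card := by omega
      have := ggg_spec U f (n - A.card - 1) A
      rwa [h1] at this
  set pick : Finset ℕ → ℕ := fun F => (Ultrafilter.nonempty_of_mem (hDU F)).choose with hpick
  have hpick_mem : ∀ F, pick F ∈ D F := fun F => (Ultrafilter.nonempty_of_mem (hDU F)).choose_spec
  set P : ℕ → Finset ℕ := fun i => Nat.rec ∅ (fun _ Pi => insert (pick Pi) Pi) i with hP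
  set a : ℕ → ℕ := fun i => pick (P i) with ha
  have hPsucc : ∀ i, P (i+1) = insert (a i) (P i) := fun i => rfl
  have hgt : ∀ i, ∀ z ∈ P i, z < a i := fun i z hz => ((hpick_mem (P i)).1).2 z hz
  have hmonoP : ∀ i j, i ≤ j → P i ⊆ P j := by
    intro i j hij
    induction j, hij using Nat.le_induction with
    | base => exact subset_rfl
    | succ j hij ih => rw [hPsucc]; exact subset_trans ih (Finset.subset_insert _ _)
  have hmem : ∀ j i, j < i → a j ∈ P i := by
    intro j i hji
    exact hmonoP (j+1) i hji (by rw [hPsucc]; exact Finset.mem_insert_self _ _)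
  have hamono : StrictMono a := by
    intro i j hij
    exact hgt j (a i) (hmem i j hij)
  have haS : ∀ i, a i ∈ S := fun i => ((hpick_mem (P i)).1).1
  -- main invariant
  have main : ∀ t (C : Finset ℕ), (∀ x ∈ C, ∃ j, a j = x) → C.card = t → t ≤ n →
      ggg U f (n - t) C = ggg U f n ∅ := by
    intro t
    induction t with
    | zero =>
      intro C _ hc _
      rw [Finset.card_eq_zero.1 hc, Nat.sub_zero]
    | succ t ih =>
      intro C hCr hc htn
      have hCne : C.Nonempty := Finset.card_pos.1 (by omega)
      set y := C.max' hCne with hy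
      obtain ⟨i, hi⟩ := hCr y (C.max'_mem hCne)
      set C' := C.erase y with hC'
      have hcard' : C'.card = t := by
        rw [hC', Finset.card_erase_of_mem (C.max'_mem hCne), hc]; omega
      have hC'P : C' ⊆ P i := by
        intro z hz
        obtain ⟨j, hj⟩ := hCr z (Finset.mem_of_mem_erase hz)
        have hzy : z < y := by
          rcases lt_or_eq_of_le (C.le_max' z (Finset.mem_of_mem_erase hz)) with h | h
          · exact h
          · exact absurd h (Finset.ne_of_mem_erase hz)
        have : j < i := by
          rw [← hj, ← hi] at hzy
          exact hamono.lt_iff_lt.1 hzy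
        rw [← hj]; exact hmem j i this
      have hins : insert (a i) C' = C := by
        rw [hi, hC', Finset.insert_erase (C.max'_mem hCne)]
      have hkey : ggg U f (n - C'.card - 1) (insert (a i) C') = ggg U f (n - C'.card) C' := by
        have h3 := (hpick_mem (P i)).2
        simp only [Set.mem_iInter] at h3
        exact h3 C' (by
          simp only [Finset.mem_filter, Finset.mem_powerset]
          exact ⟨hC'P, by omega⟩)
      have hstep : ggg U f (n - (t+1)) C = ggg U f (n - t) C' := by
        rw [← hins] at *
        have : n - (t+1) = n - C'.card - 1 := by omega
        rw [this, hkey, hcard']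
      rw [hstep]
      exact ih C' (fun x hx => hCr x (Finset.mem_of_mem_erase hx)) hcard' (by omega)
  refine ⟨ggg U f n ∅, Set.range a, ?_, ?_, ?_⟩
  · rintro x ⟨i, rfl⟩; exact haS i
  · exact Set.infinite_range_of_injective hamono.injective
  · intro C hC hcn
    have := main n C (fun x hx => hC hx) hcn (le_refl n)
    simpa [ggg] using this


section CORE
variable (k : ℕ) (φ : Finset ℕ → Fin (k-1))

def EdgeC (c : Fin (k-1)) (E : Finset ℕ) : Prop := φ E = c ∧ E.card = k

def Link (c : Fin (k-1)) (M : Set ℕ) (x : ℕ) : Prop :=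
  ∀ n : ℕ, ∃ E m, EdgeC k φ c E ∧ x ∈ E ∧ m ∈ M ∧ n < m ∧ m ∈ E

def Join2 (c : Fin (k-1)) (M : Set ℕ) : Prop :=
  ∀ u ∈ M, ∀ v ∈ M, u ≠ v → ∀ n : ℕ, ∃ w F₁ F₂, w ∈ M ∧ n < w ∧ F₁ ≠ F₂ ∧
    EdgeC k φ c F₁ ∧ EdgeC k φ c F₂ ∧ u ∈ F₁ ∧ w ∈ F₁ ∧ w ∈ F₂ ∧ v ∈ F₂

end CORE

lemma extendC (M : Set ℕ) (hM : M.Infinite) (A : Finset ℕ) (hA : ↑A ⊆ M) (s b : ℕ)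
    (hs : A.card ≤ s) :
    ∃ C : Finset ℕ, A ⊆ C ∧ ↑C ⊆ M ∧ C.card = s ∧ ∀ z ∈ C, z ∉ A → b < z := by
  obtain ⟨D, hD1, hD2⟩ := (hM.diff (Set.finite_Iic (max b (A.sup id)))).exists_subset_card_eq
    (s - A.card)
  have hDM : ↑D ⊆ M := fun z hz => (hD1 hz).1
  have hDgt : ∀ z ∈ D, max b (A.sup id) < z := by
    intro z hz
    have := (hD1 hz).2
    simpa using this
  have hdisj : Disjoint A D := by
    rw [Finset.disjoint_left]
    intro z hzA hzD
    have h1 : z ≤ A.sup id := Finset.le_sup (f := id) hzA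
    have := hDgt z hzD
    omega
  refine ⟨A ∪ D, Finset.subset_union_left, ?_, ?_, ?_⟩
  · intro z hz
    rcases Finset.mem_union.1 (by exact_mod_cast hz) with h | h
    · exact hA h
    · exact hDM h
  · rw [Finset.card_union_of_disjoint hdisj, hD2]; omega
  · intro z hz hzA
    rcases Finset.mem_union.1 hz with h | h
    · exact absurd h hzA
    · have := hDgt z h; omega

lemma stage_prelim (k : ℕ) (hk : 2 ≤ k) (φ : Finset ℕ → Fin (k-1))
    (Y : Finset ℕ) (M : Set ℕ) (B : Finset (Fin (k-1))) (c : Fin (k-1))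
    (hM : M.Infinite) (hYM : ∀ y ∈ Y, y ∉ M) (hBc : B.card = Y.card) (hYk : Y.card ≤ k - 1)
    (hA : ∀ C : Finset ℕ, ↑C ⊆ M → C.card = k - Y.card → φ (Y ∪ C) = c)
    (hdag : ∀ b ∈ B, ∃ x ∈ Y, ∀ E : Finset ℕ, φ E = b → E.card = k → x ∈ E → ∀ m ∈ M, m ∉ E) :
    c ∉ B ∧ Y.card + 1 ≤ k - 1 := by
  have hYdisj : ∀ C : Finset ℕ, ↑C ⊆ M → Disjoint Y C := by
    intro C hCM
    rw [Finset.disjoint_left]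
    intro y hy hyC
    exact hYM y hy (hCM hyC)
  have hcard : ∀ C : Finset ℕ, ↑C ⊆ M → C.card = k - Y.card → (Y ∪ C).card = k := by
    intro C hCM hCc
    rw [Finset.card_union_of_disjoint (hYdisj C hCM), hCc]; omega
  have hcB : c ∉ B := by
    intro hc
    obtain ⟨x, hxY, hx⟩ := hdag c hc
    obtain ⟨C, _, hCM, hCc, _⟩ := extendC M hM ∅ (by simp) (k - Y.card) 0 (by simp)
    have hCne : C.Nonempty := Finset.card_pos.1 (by omega)
    obtain ⟨m, hm⟩ := hCne
    exact hx (Y ∪ C) (hA C hCM hCc) (hcard C hCM hCc) (Finset.mem_union_left _ hxY)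
      m (hCM hm) (Finset.mem_union_right _ hm)
  refine ⟨hcB, ?_⟩
  have h1 : (insert c B).card = B.card + 1 := Finset.card_insert_of_notMem hcB
  have h2 : (insert c B).card ≤ Fintype.card (Fin (k-1)) := by
    rw [← Finset.card_univ]
    exact Finset.card_le_card (Finset.subset_univ _)
  rw [Fintype.card_fin] at h2
  omega

lemma stage (k : ℕ) (hk : 2 ≤ k) (φ : Finset ℕ → Fin (k-1)) (N : ℕ) :
    ∀ (Y : Finset ℕ) (M : Set ℕ) (B : Finset (Fin (k-1))) (c : Fin (k-1)),
    M.Infinite → (∀ y ∈ Y, y ∉ M) → B.card = Y.card → Y.card ≤ k - 1 → k - 1 ≤ Y.card + N →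
    (∀ C : Finset ℕ, ↑C ⊆ M → C.card = k - Y.card → φ (Y ∪ C) = c) →
    (∀ b ∈ B, ∃ x ∈ Y, ∀ E : Finset ℕ, φ E = b → E.card = k → x ∈ E → ∀ m ∈ M, m ∉ E) →
    ∃ c' M', M'.Infinite ∧ Join2 k φ c' M' ∧ ∀ x, Link k φ c' M' x := by
  induction N with
  | zero =>
    intro Y M B c hM hYM hBc hYk hN hA hdag
    have := (stage_prelim k hk φ Y M B c hM hYM hBc hYk hA hdag).2
    omega
  | succ N ih =>
    intro Y M B c hM hYM hBc hYk hN hA hdag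
    obtain ⟨hcB, hY1⟩ := stage_prelim k hk φ Y M B c hM hYM hBc hYk hA hdag
    have hYdisj : ∀ C : Finset ℕ, ↑C ⊆ M → Disjoint Y C := by
      intro C hCM
      rw [Finset.disjoint_left]
      intro y hy hyC
      exact hYM y hy (hCM hyC)
    have hcard : ∀ C : Finset ℕ, ↑C ⊆ M → C.card = k - Y.card → (Y ∪ C).card = k := by
      intro C hCM hCc
      rw [Finset.card_union_of_disjoint (hYdisj C hCM), hCc]; omega
    have h2k : 2 ≤ k - Y.card := by omega
    by_cases hbad : ∀ x, Link k φ c M x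
    · -- no bad vertex: this colour and set work
      refine ⟨c, M, hM, ?_, hbad⟩
      intro u hu v hv huv n
      obtain ⟨w, hw⟩ := (hM.diff (Set.finite_Iic (n + u + v))).nonempty
      have hwM : w ∈ M := hw.1
      have hwgt : n + u + v < w := by
        have := hw.2; simpa using this
      have hpair1 : ({u, w} : Finset ℕ).card ≤ k - Y.card := by
        have h := Finset.card_insert_le u ({w} : Finset ℕ)
        simp at h; omega
      have hpair2 : ({w, v} : Finset ℕ).card ≤ k - Y.card := by
        have h := Finset.card_insert_le w ({v} : Finset ℕ)
        simp at h; omega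
      obtain ⟨C₁, hA₁, hC₁M, hcard₁, _⟩ := extendC M hM {u, w}
        (by intro z hz; simp at hz; rcases hz with rfl | rfl; exacts [hu, hwM])
        (k - Y.card) 0 hpair1
      obtain ⟨C₂, hA₂, hC₂M, hcard₂, hgt₂⟩ := extendC M hM {w, v}
        (by intro z hz; simp at hz; rcases hz with rfl | rfl; exacts [hwM, hv])
        (k - Y.card) (w + u + v) hpair2
      refine ⟨w, Y ∪ C₁, Y ∪ C₂, hwM, by omega, ?_, ⟨hA C₁ hC₁M hcard₁, hcard C₁ hC₁M hcard₁⟩,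
        ⟨hA C₂ hC₂M hcard₂, hcard C₂ hC₂M hcard₂⟩,
        Finset.mem_union_right _ (hA₁ (by simp)), Finset.mem_union_right _ (hA₁ (by simp)),
        Finset.mem_union_right _ (hA₂ (by simp)), Finset.mem_union_right _ (hA₂ (by simp))⟩
      -- F₁ ≠ F₂ since u ∈ F₁ \ F₂
      intro hF
      have huF₁ : u ∈ Y ∪ C₁ := Finset.mem_union_right _ (hA₁ (by simp))
      rw [hF] at huF₁
      rcases Finset.mem_union.1 huF₁ with h | h
      · exact hYM u h hu
      · by_cases huwv : u ∈ ({w, v} : Finset ℕ)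
        · simp at huwv
          rcases huwv with rfl | rfl
          · omega
          · exact huv rfl
        · have := hgt₂ u h huwv
          omega
    · -- there is a bad vertex x
      push_neg at hbad
      obtain ⟨x, hx⟩ := hbad
      simp only [Link] at hx
      push_neg at hx
      obtain ⟨n₀, hn₀⟩ := hx
      set M' : Set ℕ := M \ Set.Iic n₀ with hM'
      have hM'inf : M'.Infinite := hM.diff (Set.finite_Iic n₀)
      have hM'M : M' ⊆ M := Set.diff_subset
      have hx' : ∀ E : Finset ℕ, φ E = c → E.card = k → x ∈ E → ∀ m ∈ M', m ∉ E := by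
        intro E h1 h2 h3 m hm
        have hmgt : n₀ < m := by have := hm.2; simpa using this
        exact hn₀ E m ⟨h1, h2⟩ h3 hm.1 hmgt
      -- x is not in M
      have hxM : x ∉ M := by
        intro hxMmem
        obtain ⟨m, hm⟩ := (hM.diff (Set.finite_Iic (n₀ + x))).nonempty
        have hmM : m ∈ M := hm.1
        have hmgt : n₀ + x < m := by have := hm.2; simpa using this
        have hpair : ({x, m} : Finset ℕ).card ≤ k - Y.card := by
          have h := Finset.card_insert_le x ({m} : Finset ℕ)
          simp at h; omega
        obtain ⟨C, hAC, hCM, hCc, _⟩ := extendC M hM {x, m}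
          (by intro z hz; simp at hz; rcases hz with rfl | rfl; exacts [hxMmem, hmM])
          (k - Y.card) 0 hpair
        exact hn₀ (Y ∪ C) m ⟨hA C hCM hCc, hcard C hCM hCc⟩
          (Finset.mem_union_right _ (hAC (by simp))) hmM (by omega)
          (Finset.mem_union_right _ (hAC (by simp)))
      -- x is not in Y
      have hxY : x ∉ Y := by
        intro hxYmem
        obtain ⟨m, hm⟩ := (hM.diff (Set.finite_Iic n₀)).nonempty
        have hmM : m ∈ M := hm.1
        have hmgt : n₀ < m := by have := hm.2; simpa using this
        have hsingle : ({m} : Finset ℕ).card ≤ k - Y.card := by simp; omega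
        obtain ⟨C, hAC, hCM, hCc, _⟩ := extendC M hM {m} (by simpa using hmM)
          (k - Y.card) 0 hsingle
        exact hn₀ (Y ∪ C) m ⟨hA C hCM hCc, hcard C hCM hCc⟩
          (Finset.mem_union_left _ hxYmem) hmM hmgt
          (Finset.mem_union_right _ (hAC (by simp)))
      obtain ⟨c', T, hTM', hTinf, hT⟩ :=
        infRamsey (k - (insert x Y).card) (fun C => φ (insert x Y ∪ C)) M' hM'inf
      have hxYcard : (insert x Y).card = Y.card + 1 := Finset.card_insert_of_notMem hxY
      refine ih (insert x Y) T (insert c B) c' hTinf ?_ ?_ ?_ ?_ ?_ ?_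
      · intro y hy
        rcases Finset.mem_insert.1 hy with rfl | hyY
        · exact fun hyT => hxM (hM'M (hTM' hyT))
        · exact fun hyT => hYM y hyY (hM'M (hTM' hyT))
      · rw [Finset.card_insert_of_notMem hcB, hBc, hxYcard]
      · omega
      · omega
      · intro C hCT hCc
        exact hT C hCT hCc
      · intro b hb
        rcases Finset.mem_insert.1 hb with rfl | hbB
        · exact ⟨x, Finset.mem_insert_self _ _,
            fun E h1 h2 h3 m hmT => hx' E h1 h2 h3 m (hTM' hmT)⟩
        · obtain ⟨xb, hxbY, hxb⟩ := hdag b hbB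
          exact ⟨xb, Finset.mem_insert_of_mem hxbY,
            fun E h1 h2 h3 m hmT => hxb E h1 h2 h3 m (hM'M (hTM' hmT))⟩

lemma star (k : ℕ) (hk : 2 ≤ k) (φ : Finset ℕ → Fin (k-1)) :
    ∃ c M, Set.Infinite M ∧ Join2 k φ c M ∧ ∀ x, Link k φ c M x := by
  obtain ⟨c₀, M₀, _, hM₀inf, hM₀⟩ := infRamsey k φ Set.univ Set.infinite_univ
  refine stage k hk φ (k-1) ∅ M₀ ∅ c₀ hM₀inf (by simp) (by simp) (by simp) (by omega)
    ?_ (by simp)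
  intro C hCM hCc
  rw [Finset.empty_union]
  exact hM₀ C hCM (by simpa using hCc)

structure BP (k : ℕ) (φ : Finset ℕ → Fin (k-1)) (c : Fin (k-1)) (M : Set ℕ) where
  l : ℕ
  v : ℕ → ℕ
  e : ℕ → Finset ℕ
  hpos : 0 < l
  hinj : ∀ i < l, ∀ j < l, v i = v j → i = j
  hlast : v (l-1) ∈ M
  hedge : ∀ i, i + 1 < l → φ (e i) = c ∧ (e i).card = k ∧ v i ∈ e i ∧ v (i+1) ∈ e i
  heinj : ∀ i, i + 1 < l → ∀ j, j + 1 < l → e i = e j → i = j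

lemma BP.extend {k : ℕ} {φ : Finset ℕ → Fin (k-1)} {c : Fin (k-1)} {M : Set ℕ}
    (hJ : Join2 k φ c M) (hL : ∀ x, Link k φ c M x)
    (s : BP k φ c M) (t : ℕ) (ht : ∀ i, i < s.l → s.v i ≠ t) :
    ∃ s' : BP k φ c M, s'.l = s.l + 4 ∧ (∀ i, i < s.l → s'.v i = s.v i) ∧
      (∀ i, i + 1 < s.l → s'.e i = s.e i) ∧ s'.v (s.l + 2) = t := by
  set b₀ := ((Finset.range s.l).sup s.v) + ((Finset.range s.l).sup (fun i => (s.e i).sup id)) + t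
    with hb₀
  have hvb : ∀ i, i < s.l → s.v i ≤ b₀ := by
    intro i hi
    have := Finset.le_sup (f := s.v) (Finset.mem_range.2 hi)
    omega
  have heb : ∀ i, i + 1 < s.l → ∀ z ∈ s.e i, z ≤ b₀ := by
    intro i hi z hz
    have h1 : z ≤ (s.e i).sup id := Finset.le_sup (f := id) hz
    have h2 : (s.e i).sup id ≤ (Finset.range s.l).sup (fun i => (s.e i).sup id) :=
      Finset.le_sup (f := fun i => (s.e i).sup id) (Finset.mem_range.2 (by omega))
    omega
  have htb : t ≤ b₀ := by omega
  obtain ⟨E, m, hEc, htE, hmM, hmb, hmE⟩ := hL t b₀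
  set b₁ := b₀ + E.sup id with hb₁
  have hEb : ∀ z ∈ E, z ≤ b₁ := by
    intro z hz
    have := Finset.le_sup (f := id) hz
    simp only [id] at this
    omega
  obtain ⟨E', m', hE'c, htE', hm'M, hm'b, hm'E'⟩ := hL t b₁
  set b₂ := b₁ + E'.sup id with hb₂
  have hE'b : ∀ z ∈ E', z ≤ b₂ := by
    intro z hz
    have := Finset.le_sup (f := id) hz
    simp only [id] at this
    omega
  have hmb₁ : m ≤ b₁ := hEb m hmE
  have hm'b₂ : m' ≤ b₂ := hE'b m' hm'E'
  have hlM : s.v (s.l - 1) ∈ M := s.hlast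
  have hlb : s.v (s.l - 1) ≤ b₀ := hvb _ (by have := s.hpos; omega)
  have hlm : s.v (s.l - 1) ≠ m := by omega
  obtain ⟨w, F₁, F₂, hwM, hwb, hFne, hF₁c, hF₂c, huF₁, hwF₁, hwF₂, hvF₂⟩ :=
    hJ _ hlM _ hmM hlm b₂
  set v' : ℕ → ℕ := fun i => if i < s.l then s.v i else if i = s.l then w
    else if i = s.l + 1 then m else if i = s.l + 2 then t else m' with hv'
  set e' : ℕ → Finset ℕ := fun i => if i + 1 < s.l then s.e i else if i = s.l - 1 then F₁
    else if i = s.l then F₂ else if i = s.l + 1 then E else E' with he'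
  have hpos := s.hpos
  have hv'old : ∀ i, i < s.l → v' i = s.v i := by
    intro i hi; simp only [hv']; split_ifs <;> first | rfl | omega | (exfalso; omega)
  have hv'w : v' s.l = w := by
    simp only [hv']; split_ifs <;> first | rfl | omega | (exfalso; omega)
  have hv'm : v' (s.l + 1) = m := by
    simp only [hv']; split_ifs <;> first | rfl | omega | (exfalso; omega)
  have hv't : v' (s.l + 2) = t := by
    simp only [hv']; split_ifs <;> first | rfl | omega | (exfalso; omega)
  have hv'm' : v' (s.l + 3) = m' := by
    simp only [hv']; split_ifs <;> first | rfl | omega | (exfalso; omega)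
  have he'old : ∀ i, i + 1 < s.l → e' i = s.e i := by
    intro i hi; simp only [he']; split_ifs <;> first | rfl | omega | (exfalso; omega)
  have he'F₁ : e' (s.l - 1) = F₁ := by
    simp only [he']; split_ifs <;> first | rfl | omega | (exfalso; omega)
  have he'F₂ : e' s.l = F₂ := by
    simp only [he']; split_ifs <;> first | rfl | omega | (exfalso; omega)
  have he'E : e' (s.l + 1) = E := by
    simp only [he']; split_ifs <;> first | rfl | omega | (exfalso; omega)
  have he'E' : e' (s.l + 2) = E' := by
    simp only [he']; split_ifs <;> first | rfl | omega | (exfalso; omega)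
  refine ⟨⟨s.l + 4, v', e', by omega, ?_, ?_, ?_, ?_⟩, rfl, hv'old, he'old, hv't⟩
  · -- injectivity of v'
    intro i hi j hj h
    rcases (by omega : i < s.l ∨ i = s.l ∨ i = s.l + 1 ∨ i = s.l + 2 ∨ i = s.l + 3)
      with hi' | rfl | rfl | rfl | rfl <;>
    rcases (by omega : j < s.l ∨ j = s.l ∨ j = s.l + 1 ∨ j = s.l + 2 ∨ j = s.l + 3)
      with hj' | rfl | rfl | rfl | rfl
    · rw [hv'old i hi', hv'old j hj'] at h; exact s.hinj i hi' j hj' h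
    · rw [hv'old i hi', hv'w] at h; have := hvb i hi'; omega
    · rw [hv'old i hi', hv'm] at h; have := hvb i hi'; omega
    · rw [hv'old i hi', hv't] at h; exact absurd h (ht i hi')
    · rw [hv'old i hi', hv'm'] at h; have := hvb i hi'; omega
    · rw [hv'w, hv'old j hj'] at h; have := hvb j hj'; omega
    · rfl
    · rw [hv'w, hv'm] at h; omega
    · rw [hv'w, hv't] at h; omega
    · rw [hv'w, hv'm'] at h; omega
    · rw [hv'm, hv'old j hj'] at h; have := hvb j hj'; omega
    · rw [hv'm, hv'w] at h; omega
    · rfl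
    · rw [hv'm, hv't] at h; omega
    · rw [hv'm, hv'm'] at h; omega
    · rw [hv't, hv'old j hj'] at h; exact absurd h.symm (ht j hj')
    · rw [hv't, hv'w] at h; omega
    · rw [hv't, hv'm] at h; omega
    · rfl
    · rw [hv't, hv'm'] at h; omega
    · rw [hv'm', hv'old j hj'] at h; have := hvb j hj'; omega
    · rw [hv'm', hv'w] at h; omega
    · rw [hv'm', hv'm] at h; omega
    · rw [hv'm', hv't] at h; omega
    · rfl
  · -- last vertex is in M
    have h4 : s.l + 4 - 1 = s.l + 3 := by omega
    rw [h4, hv'm']; exact hm'M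
  · -- edge conditions
    intro i hi
    rcases (by omega : i + 1 < s.l ∨ i = s.l - 1 ∨ i = s.l ∨ i = s.l + 1 ∨ i = s.l + 2)
      with hi' | rfl | rfl | rfl | rfl
    · rw [he'old i hi', hv'old i (by omega), hv'old (i+1) (by omega)]
      exact s.hedge i hi'
    · have h1 : s.l - 1 + 1 = s.l := by omega
      rw [he'F₁, h1, hv'w, hv'old _ (by omega)]
      exact ⟨hF₁c.1, hF₁c.2, huF₁, hwF₁⟩
    · rw [he'F₂, hv'w, hv'm]
      exact ⟨hF₂c.1, hF₂c.2, hwF₂, hvF₂⟩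
    · have h1 : s.l + 1 + 1 = s.l + 2 := by omega
      rw [he'E, h1, hv'm, hv't]
      exact ⟨hEc.1, hEc.2, hmE, htE⟩
    · have h1 : s.l + 2 + 1 = s.l + 3 := by omega
      rw [he'E', h1, hv't, hv'm']
      exact ⟨hE'c.1, hE'c.2, htE', hm'E'⟩
  · -- injectivity of e'
    intro i hi j hj h
    rcases (by omega : i + 1 < s.l ∨ i = s.l - 1 ∨ i = s.l ∨ i = s.l + 1 ∨ i = s.l + 2)
      with hi' | rfl | rfl | rfl | rfl <;>
    rcases (by omega : j + 1 < s.l ∨ j = s.l - 1 ∨ j = s.l ∨ j = s.l + 1 ∨ j = s.l + 2)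
      with hj' | rfl | rfl | rfl | rfl
    · rw [he'old i hi', he'old j hj'] at h; exact s.heinj i hi' j hj' h
    · rw [he'old i hi', he'F₁] at h
      have hw' := hwF₁; rw [← h] at hw'
      have := heb i hi' w hw'; omega
    · rw [he'old i hi', he'F₂] at h
      have hw' := hwF₂; rw [← h] at hw'
      have := heb i hi' w hw'; omega
    · rw [he'old i hi', he'E] at h
      have hm2 := hmE; rw [← h] at hm2
      have := heb i hi' m hm2; omega
    · rw [he'old i hi', he'E'] at h
      have hm2 := hm'E'; rw [← h] at hm2
      have := heb i hi' m' hm2; omega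
    · rw [he'F₁, he'old j hj'] at h
      have hw' := hwF₁; rw [h] at hw'
      have := heb j hj' w hw'; omega
    · rfl
    · rw [he'F₁, he'F₂] at h; exact absurd h hFne
    · rw [he'F₁, he'E] at h
      have hw' := hwF₁; rw [h] at hw'
      have := hEb w hw'; omega
    · rw [he'F₁, he'E'] at h
      have hw' := hwF₁; rw [h] at hw'
      have := hE'b w hw'; omega
    · rw [he'F₂, he'old j hj'] at h
      have hw' := hwF₂; rw [h] at hw'
      have := heb j hj' w hw'; omega
    · rw [he'F₂, he'F₁] at h; exact absurd h.symm hFne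
    · rfl
    · rw [he'F₂, he'E] at h
      have hw' := hwF₂; rw [h] at hw'
      have := hEb w hw'; omega
    · rw [he'F₂, he'E'] at h
      have hw' := hwF₂; rw [h] at hw'
      have := hE'b w hw'; omega
    · rw [he'E, he'old j hj'] at h
      have hm2 := hmE; rw [h] at hm2
      have := heb j hj' m hm2; omega
    · rw [he'E, he'F₁] at h
      have hw' := hwF₁; rw [← h] at hw'
      have := hEb w hw'; omega
    · rw [he'E, he'F₂] at h
      have hw' := hwF₂; rw [← h] at hw'
      have := hEb w hw'; omega
    · rfl
    · rw [he'E, he'E'] at h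
      have hm2 := hm'E'; rw [← h] at hm2
      have := hEb m' hm2; omega
    · rw [he'E', he'old j hj'] at h
      have hm2 := hm'E'; rw [h] at hm2
      have := heb j hj' m' hm2; omega
    · rw [he'E', he'F₁] at h
      have hw' := hwF₁; rw [← h] at hw'
      have := hE'b w hw'; omega
    · rw [he'E', he'F₂] at h
      have hw' := hwF₂; rw [← h] at hw'
      have := hE'b w hw'; omega
    · rw [he'E', he'E] at h
      have hm2 := hm'E'; rw [h] at hm2
      have := hEb m' hm2; omega
    · rfl

noncomputable def BPinit {k : ℕ} {φ : Finset ℕ → Fin (k-1)} {c : Fin (k-1)} {M : Set ℕ}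
    (hM : M.Infinite) : BP k φ c M where
  l := 1
  v := fun _ => hM.nonempty.some
  e := fun _ => ∅
  hpos := one_pos
  hinj := by intro i hi j hj _; omega
  hlast := hM.nonempty.some_mem
  hedge := by intro i hi; omega
  heinj := by intro i hi j hj _; omega

noncomputable def BPstep {k : ℕ} {φ : Finset ℕ → Fin (k-1)} {c : Fin (k-1)} {M : Set ℕ}
    (hJ : Join2 k φ c M) (hL : ∀ x, Link k φ c M x) (n : ℕ) (s : BP k φ c M) : BP k φ c M :=
  if h : ∃ i, i < s.l ∧ s.v i = n then
    (BP.extend hJ hL s ((Finset.range s.l).sup s.v + 1)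
      (fun i hi heq => by
        have := Finset.le_sup (f := s.v) (Finset.mem_range.2 hi); omega)).choose
  else
    (BP.extend hJ hL s n (fun i hi heq => h ⟨i, hi, heq⟩)).choose

noncomputable def BPchain {k : ℕ} {φ : Finset ℕ → Fin (k-1)} {c : Fin (k-1)} {M : Set ℕ}
    (hM : M.Infinite) (hJ : Join2 k φ c M) (hL : ∀ x, Link k φ c M x) : ℕ → BP k φ c M
  | 0 => BPinit hM
  | (n+1) => BPstep hJ hL n (BPchain hM hJ hL n)

lemma BPstep_spec {k : ℕ} {φ : Finset ℕ → Fin (k-1)} {c : Fin (k-1)} {M : Set ℕ}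
    (hJ : Join2 k φ c M) (hL : ∀ x, Link k φ c M x) (n : ℕ) (s : BP k φ c M) :
    (BPstep hJ hL n s).l = s.l + 4 ∧ (∀ i, i < s.l → (BPstep hJ hL n s).v i = s.v i) ∧
      (∀ i, i + 1 < s.l → (BPstep hJ hL n s).e i = s.e i) ∧
      ∃ i, i < (BPstep hJ hL n s).l ∧ (BPstep hJ hL n s).v i = n := by
  unfold BPstep
  split
  case isTrue h =>
    obtain ⟨i, hi, hv⟩ := h
    have spec := (BP.extend hJ hL s ((Finset.range s.l).sup s.v + 1)
      (fun i hi heq => by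
        have := Finset.le_sup (f := s.v) (Finset.mem_range.2 hi); omega)).choose_spec
    exact ⟨spec.1, spec.2.1, spec.2.2.1,
      ⟨i, by omega, by rw [spec.2.1 i hi]; exact hv⟩⟩
  case isFalse h =>
    have spec := (BP.extend hJ hL s n (fun i hi heq => h ⟨i, hi, heq⟩)).choose_spec
    exact ⟨spec.1, spec.2.1, spec.2.2.1, ⟨s.l + 2, by omega, spec.2.2.2⟩⟩

section CHAIN
variable {k : ℕ} {φ : Finset ℕ → Fin (k-1)} {c : Fin (k-1)} {M : Set ℕ}
  (hM : M.Infinite) (hJ : Join2 k φ c M) (hL : ∀ x, Link k φ c M x)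

lemma BPchain_l : ∀ n, (BPchain hM hJ hL n).l = 1 + 4 * n := by
  intro n
  induction n with
  | zero => rfl
  | succ n ih =>
    have := (BPstep_spec hJ hL n (BPchain hM hJ hL n)).1
    show (BPstep hJ hL n (BPchain hM hJ hL n)).l = 1 + 4 * (n+1)
    omega

lemma BPchain_stab : ∀ a b, a ≤ b →
    (∀ i, i < (BPchain hM hJ hL a).l →
      (BPchain hM hJ hL b).v i = (BPchain hM hJ hL a).v i) ∧
    (∀ i, i + 1 < (BPchain hM hJ hL a).l →
      (BPchain hM hJ hL b).e i = (BPchain hM hJ hL a).e i) := by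
  intro a b hab
  induction b, hab using Nat.le_induction with
  | base => exact ⟨fun _ _ => rfl, fun _ _ => rfl⟩
  | succ b hab ih =>
    have hstep := BPstep_spec hJ hL b (BPchain hM hJ hL b)
    have hlab : (BPchain hM hJ hL a).l ≤ (BPchain hM hJ hL b).l := by
      rw [BPchain_l, BPchain_l]; omega
    constructor
    · intro i hi
      have h1 : (BPchain hM hJ hL (b+1)).v i = (BPchain hM hJ hL b).v i :=
        hstep.2.1 i (by omega)
      rw [h1, ih.1 i hi]
    · intro i hi
      have h1 : (BPchain hM hJ hL (b+1)).e i = (BPchain hM hJ hL b).e i :=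
        hstep.2.2.1 i (by omega)
      rw [h1, ih.2 i hi]

lemma BPchain_cover : ∀ n, ∃ i, i < (BPchain hM hJ hL (n+1)).l ∧
    (BPchain hM hJ hL (n+1)).v i = n := by
  intro n
  exact (BPstep_spec hJ hL n (BPchain hM hJ hL n)).2.2.2

end CHAIN

lemma star_to_path {k : ℕ} {φ : Finset ℕ → Fin (k-1)} {c : Fin (k-1)} {M : Set ℕ}
    (hM : M.Infinite) (hJ : Join2 k φ c M) (hL : ∀ x, Link k φ c M x) :
    ∃ (v : ℕ → ℕ) (e : ℕ → Finset ℕ), Function.Bijective v ∧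
      (∀ i, φ (e i) = c ∧ (e i).card = k ∧ v i ∈ e i ∧ v (i+1) ∈ e i) ∧
      Function.Injective e := by
  set ch := BPchain hM hJ hL with hch
  have hl : ∀ n, (ch n).l = 1 + 4 * n := BPchain_l hM hJ hL
  set v : ℕ → ℕ := fun i => (ch (i+1)).v i with hv
  set e : ℕ → Finset ℕ := fun i => (ch (i+1)).e i with he
  have hvstage : ∀ i n, i + 1 ≤ n → (ch n).v i = v i := by
    intro i n hn
    have := (BPchain_stab hM hJ hL (i+1) n hn).1 i (by rw [hl]; omega)
    rw [hv]; exact this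
  have hestage : ∀ i n, i + 1 ≤ n → (ch n).e i = e i := by
    intro i n hn
    have := (BPchain_stab hM hJ hL (i+1) n hn).2 i (by rw [hl]; omega)
    rw [he]; exact this
  refine ⟨v, e, ⟨?_, ?_⟩, ?_, ?_⟩
  · -- injective
    intro i j h
    rcases le_total i j with hij | hij
    · have h1 : (ch (j+1)).v i = v i := hvstage i (j+1) (by omega)
      have h2 : (ch (j+1)).v j = v j := hvstage j (j+1) (by omega)
      exact (ch (j+1)).hinj i (by rw [hl]; omega) j (by rw [hl]; omega) (by rw [h1, h2, h])
    · have h1 : (ch (i+1)).v i = v i := hvstage i (i+1) (by omega)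
      have h2 : (ch (i+1)).v j = v j := hvstage j (i+1) (by omega)
      exact (ch (i+1)).hinj i (by rw [hl]; omega) j (by rw [hl]; omega) (by rw [h1, h2, h])
  · -- surjective
    intro n
    obtain ⟨i, hi, hvn⟩ := BPchain_cover hM hJ hL n
    refine ⟨i, ?_⟩
    rcases le_total (i+1) (n+1) with hc | hc
    · rw [← hvstage i (n+1) hc]; exact hvn
    · rw [← hvstage i (i+1) (le_refl _)]
      rw [(BPchain_stab hM hJ hL (n+1) (i+1) hc).1 i hi]
      exact hvn
  · -- edges
    intro i
    have hedge := (ch (i+1)).hedge i (by rw [hl]; omega)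
    have h1 : (ch (i+1)).v i = v i := hvstage i (i+1) (by omega)
    have h2 : (ch (i+2)).v (i+1) = v (i+1) := hvstage (i+1) (i+2) (by omega)
    have h3 : (ch (i+2)).v (i+1) = (ch (i+1)).v (i+1) :=
      (BPchain_stab hM hJ hL (i+1) (i+2) (by omega)).1 (i+1) (by rw [hl]; omega)
    have h4 : (ch (i+1)).e i = e i := hestage i (i+1) (by omega)
    rw [← h1, ← h2, h3, ← h4]
    exact hedge
  · -- edge injectivity
    intro i j h
    rcases le_total i j with hij | hij
    · have h1 : (ch (j+1)).e i = e i := hestage i (j+1) (by omega)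
      have h2 : (ch (j+1)).e j = e j := hestage j (j+1) (by omega)
      exact (ch (j+1)).heinj i (by rw [hl]; omega) j (by rw [hl]; omega) (by rw [h1, h2, h])
    · have h1 : (ch (i+1)).e i = e i := hestage i (i+1) (by omega)
      have h2 : (ch (i+1)).e j = e j := hestage j (i+1) (by omega)
      exact (ch (i+1)).heinj i (by rw [hl]; omega) j (by rw [hl]; omega) (by rw [h1, h2, h])

/-- A monochromatic `t`-tight Berge-path of colour `c` (finite of length ≥ 1,
one-way infinite, or a single vertex with no edges) in the complete `k`-uniform
hypergraph on `ℕ` edge-coloured by `φ`, with core `X`. The core vertex sequence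
is `v 0, v 1, …` (of length `N`, possibly `⊤`), the edges are `e 0, e 1, …`
(pairwise distinct `k`-sets of colour `c`), and edge `e i` contains the `t`
consecutive core vertices `v i, …, v (i + t - 1)`. -/
def IsMonoBergePath (k t : ℕ) {r : ℕ} (φ : Finset ℕ → Fin r) (c : Fin r)
    (X : Set ℕ) : Prop :=
  (∃ v : ℕ, X = {v}) ∨
  ∃ (N : ℕ∞) (v : ℕ → ℕ) (e : ℕ → Finset ℕ),
    (t : ℕ∞) ≤ N ∧
    (∀ i j : ℕ, (i : ℕ∞) < N → (j : ℕ∞) < N → v i = v j → i = j) ∧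
    X = {x | ∃ i : ℕ, (i : ℕ∞) < N ∧ v i = x} ∧
    (∀ i : ℕ, ((i + t : ℕ) : ℕ∞) ≤ N →
      (e i).card = k ∧ φ (e i) = c ∧ ∀ j : ℕ, i ≤ j → j < i + t → v j ∈ e i) ∧
    (∀ i j : ℕ, ((i + t : ℕ) : ℕ∞) ≤ N → ((j + t : ℕ) : ℕ∞) ≤ N → e i = e j → i = j)

/-- Every `(k-1)`-edge-coloured countably infinite complete `k`-graph contains
a monochromatic (2-tight) Berge-path whose core is all of `ℕ`, i.e. a
monochromatic Hamiltonian Berge-path. -/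
theorem mono_hamiltonian_berge_path (k : ℕ) (hk : 2 ≤ k)
    (φ : Finset ℕ → Fin (k - 1)) :
    ∃ c : Fin (k - 1), IsMonoBergePath k 2 φ c Set.univ := by
  obtain ⟨c, M, hM, hJ, hL⟩ := star k hk φ
  obtain ⟨v, e, hbij, hedge, heinj⟩ := star_to_path hM hJ hL
  refine ⟨c, Or.inr ⟨⊤, v, e, le_top, ?_, ?_, ?_, ?_⟩⟩
  · intro i j _ _ h
    exact hbij.1 h
  · ext x
    simp only [Set.mem_univ, Set.mem_setOf_eq, true_iff]
    obtain ⟨i, rfl⟩ := hbij.2 x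
    exact ⟨i, WithTop.coe_lt_top i, rfl⟩
  · intro i _
    refine ⟨(hedge i).2.1, (hedge i).1, ?_⟩
    intro j h1 h2
    have hj : j = i ∨ j = i + 1 := by omega
    rcases hj with rfl | rfl
    · exact (hedge j).2.2.1
    · exact (hedge i).2.2.2
  · intro i j _ _ h
    exact heinj h
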